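/- Fix integers d ≥ 1, K′ ≥ 1, M ≥ 1 and a real ξ > 0. For each integer i ≥ 0, let interval i consist of the rounds iK′+1,…,(i+1)K′, and for each round t in interval i let A_t : {0,1}^i → ℝ^d be an arbitrary function. For m = 1,…,M, let epoch m consist of the intervals i with (16^m − 16)/15 ≤ i ≤ (16^{m+1} − 16)/15 − 1 (so epoch m contains 16^m·K′ rounds). Then there exist nested closed intervals [1/4, 3/4] ⊇ I_1 ⊇ I_2 ⊇ … ⊇ I_M, where I_m has length 4^{−(m+3)}, such that for every m ∈ {1,…,M} and every p ∈ I_m, the inequality E_{X∼B_p^{i}}[‖A_t(X) − ξ·p⃗‖₂²] ≥ 16^{−(m+3)}·d·ξ²/8 holds for at least half of the rounds t in the intervals of epoch m (i.e., for at least 16^m·K′/2 rounds t, where i is the index of the interval containing t). -/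

import Mathlib

set_option maxHeartbeats 1000000


/-!
Statement 10 (Lemma 7): existence of nested intervals `I_1 ⊇ … ⊇ I_M` inside
`[1/4, 3/4]`, `I_m` of length `4^{−(m+3)}`, such that for every `p ∈ I_m` the
inequality `E_{B_p^i}[‖A_t(X) − ξ·p⃗‖²] ≥ 16^{−(m+3)}·d·ξ²/8` holds for at least
half of the rounds `t` of epoch `m`.
-/

open scoped BigOperators
open Finset

noncomputable section

abbrev EV (d : ℕ) := EuclideanSpace ℝ (Fin d)

/-- Expectation of `F` under the product Bernoulli measure `B_p^i` on `{0,1}^i`. -/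
def bernExp (i : ℕ) (p : ℝ) (F : (Fin i → Bool) → ℝ) : ℝ :=
  ∑ X : Fin i → Bool, (∏ j : Fin i, if X j then p else 1 - p) * F X

/-- The constant vector `(p, …, p) ∈ ℝ^d`. -/
def constVec (d : ℕ) (p : ℝ) : EV d := WithLp.toLp 2 (fun _ => p)

/-- The index of the interval containing round `t` (interval `i` consists of the
rounds `iK′+1, …, (i+1)K′`). -/
def intervalIdx (K' t : ℕ) : ℕ := (t - 1) / K'

/-- The rounds belonging to the intervals of epoch `m`, namely the intervals `i`
with `(16^m − 16)/15 ≤ i ≤ (16^{m+1} − 16)/15 − 1`. -/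
def epochRounds (K' m : ℕ) : Finset ℕ :=
  Finset.Ioc (((16 ^ m - 16) / 15) * K') (((16 ^ (m + 1) - 16) / 15) * K')

namespace S10

def w (i : ℕ) (p : ℝ) (X : Fin i → Bool) : ℝ := ∏ j, if X j then p else 1 - p

lemma sum_prod_bool (i : ℕ) (f : Fin i → Bool → ℝ) :
    ∑ X : Fin i → Bool, ∏ j, f j (X j) = ∏ j, (f j true + f j false) := by
  rw [← Fintype.piFinset_univ, ← Finset.prod_univ_sum]
  simp

lemma sum_w (i : ℕ) (p : ℝ) : ∑ X : Fin i → Bool, w i p X = 1 := by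
  have := sum_prod_bool i (fun j b => if b then p else 1 - p)
  simp only [w] at *
  rw [this]
  simp

lemma w_nonneg (i : ℕ) (p : ℝ) (hp0 : 0 ≤ p) (hp1 : p ≤ 1) (X : Fin i → Bool) :
    0 ≤ w i p X := by
  apply Finset.prod_nonneg
  intro j _
  by_cases h : X j <;> simp [h] <;> linarith

lemma w_pos (i : ℕ) (q : ℝ) (hq0 : 0 < q) (hq1 : q < 1) (X : Fin i → Bool) :
    0 < w i q X := by
  apply Finset.prod_pos
  intro j _
  by_cases h : X j <;> simp [h] <;> linarith

lemma sum_sq_div (i : ℕ) (p q : ℝ) (hq0 : 0 < q) (hq1 : q < 1) :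
    ∑ X : Fin i → Bool, (w i p X)^2 / w i q X
      = (1 + (p - q)^2 / (q * (1 - q)))^i := by
  have h1 : ∀ X : Fin i → Bool, (w i p X)^2 / w i q X
      = ∏ j, ((if X j then p else 1-p)^2 / (if X j then q else 1-q)) := by
    intro X
    simp only [w]
    rw [← Finset.prod_pow, ← Finset.prod_div_distrib]
  rw [Finset.sum_congr rfl (fun X _ => h1 X),
    sum_prod_bool i (fun j b => (if b then p else 1-p)^2 / (if b then q else 1-q))]
  have hq1' : (1:ℝ) - q ≠ 0 := by linarith
  have h2 : p^2/q + (1-p)^2/(1-q) = 1 + (p - q)^2 / (q * (1 - q)) := by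
    field_simp
    ring
  simp [h2]

lemma chi_pow_le (s : ℝ) (i : ℕ) (hs : 0 ≤ s) (h : s * i ≤ 1/15) :
    (1+s)^i ≤ 15/14 := by
  rcases Nat.eq_zero_or_pos i with hi | hi
  · simp [hi]; norm_num
  have hsi : (1:ℝ) ≤ i := by exact_mod_cast hi
  have hs' : s ≤ 1/15 := by nlinarith
  have hb : 1 + (i:ℝ) * (-s) ≤ (1 + (-s))^i := one_add_mul_le_pow (by linarith) i
  have h2 : (1+s)^i * (1-s)^i ≤ 1 := by
    rw [← mul_pow]
    apply pow_le_one₀ <;> nlinarith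
  have h3 : (0:ℝ) < 1 - s * i := by linarith
  have h4 : (1+s)^i * (1 - s*i) ≤ 1 := by
    have : (0:ℝ) ≤ (1+s)^i := by positivity
    calc (1+s)^i * (1 - s*i) ≤ (1+s)^i * (1-s)^i := by
          apply mul_le_mul_of_nonneg_left _ this
          calc 1 - s*i = 1 + (i:ℝ)*(-s) := by ring
            _ ≤ (1 + (-s))^i := hb
            _ = (1-s)^i := by ring_nf
      _ ≤ 1 := h2
  nlinarith [pow_nonneg (by linarith : (0:ℝ) ≤ 1+s) i]

lemma tv_bound (i : ℕ) (p q : ℝ) (hp0 : 0 ≤ p) (hp1 : p ≤ 1) (hq0 : 0 < q) (hq1 : q < 1)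
    (hchi : (1 + (p - q)^2 / (q * (1 - q)))^i ≤ 15/14) :
    ∑ X : Fin i → Bool, |w i p X - w i q X| ≤ 3/10 := by
  set Δ := fun X : Fin i → Bool => w i p X - w i q X with hΔ
  have cs := Finset.sum_mul_sq_le_sq_mul_sq Finset.univ
    (fun X => |Δ X| / Real.sqrt (w i q X)) (fun X => Real.sqrt (w i q X))
  have hwq : ∀ X : Fin i → Bool, 0 < w i q X := w_pos i q hq0 hq1
  have e1 : ∀ X : Fin i → Bool, |Δ X| / Real.sqrt (w i q X) * Real.sqrt (w i q X) = |Δ X| := by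
    intro X
    exact div_mul_cancel₀ _ (Real.sqrt_ne_zero'.mpr (hwq X))
  have e2 : ∀ X : Fin i → Bool, (|Δ X| / Real.sqrt (w i q X))^2 = Δ X ^2 / w i q X := by
    intro X
    rw [div_pow, sq_abs, Real.sq_sqrt (hwq X).le]
  have e3 : ∀ X : Fin i → Bool, (Real.sqrt (w i q X))^2 = w i q X := fun X => Real.sq_sqrt (hwq X).le
  simp only [e1, e2, e3] at cs
  have e4 : ∑ X : Fin i → Bool, Δ X ^2 / w i q X
      = (1 + (p - q)^2 / (q * (1 - q)))^i - 1 := by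
    have : ∀ X : Fin i → Bool, Δ X ^2 / w i q X
        = (w i p X)^2 / w i q X - 2 * w i p X + w i q X := by
      intro X
      have hne := (hwq X).ne'
      field_simp [hΔ]
      ring
    rw [Finset.sum_congr rfl (fun X _ => this X)]
    rw [Finset.sum_add_distrib, Finset.sum_sub_distrib, sum_sq_div i p q hq0 hq1,
      ← Finset.mul_sum, sum_w, sum_w]
    ring
  rw [e4, sum_w] at cs
  have h5 : (∑ X : Fin i → Bool, |Δ X|)^2 ≤ 1/14 := by
    calc (∑ X : Fin i → Bool, |Δ X|)^2 ≤ ((1 + (p - q)^2 / (q * (1 - q)))^i - 1) * 1 := cs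
      _ ≤ 1/14 := by linarith
  have h6 : 0 ≤ ∑ X : Fin i → Bool, |Δ X| := Finset.sum_nonneg fun X _ => abs_nonneg _
  nlinarith


lemma bernExp_eq (i : ℕ) (p : ℝ) (F : (Fin i → Bool) → ℝ) :
    bernExp i p F = ∑ X : Fin i → Bool, w i p X * F X := rfl


lemma key (d i : ℕ) (ξ p q c : ℝ) (hd : 1 ≤ d) (hξ : 0 < ξ) (hc : 0 < c)
    (hp : p ∈ Set.Icc (1/4:ℝ) (3/4)) (hq : q ∈ Set.Icc (1/4:ℝ) (3/4))
    (hgap : 32*c ≤ d*ξ^2*(q-p)^2) (hi : (i:ℝ)*(q-p)^2 ≤ 1/80)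
    (A : (Fin i → Bool) → EV d) :
    c ≤ bernExp i p (fun X => ‖A X - ξ•constVec d p‖^2) ∨
    c ≤ bernExp i q (fun X => ‖A X - ξ•constVec d q‖^2) := by
  classical
  by_contra hcon
  push_neg at hcon
  obtain ⟨h1, h2⟩ := hcon
  obtain ⟨hp1, hp2⟩ := hp
  obtain ⟨hq1, hq2⟩ := hq
  set u := ξ•constVec d p with hu
  set v := ξ•constVec d q with hv
  have hnorm : ‖u - v‖^2 = d * (ξ*(p-q))^2 := by
    have hentry : ∀ j : Fin d, (u - v) j = ξ*(p-q) := by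
      intro j
      simp [hu, hv, constVec]
      ring
    rw [EuclideanSpace.norm_eq, Real.sq_sqrt (Finset.sum_nonneg fun j _ => sq_nonneg _)]
    simp [hentry, Real.norm_eq_abs, sq_abs]
    left
    rw [← abs_mul, sq_abs]
  have hwp := w_nonneg i p (by linarith) (by linarith)
  have hwq := w_nonneg i q (by linarith) (by linarith)
  set E := Finset.univ.filter (fun X : Fin i → Bool => ‖A X - u‖^2 < 8*c) with hE
  have hpt : ∀ X, 32*c ≤ 2*‖A X - u‖^2 + 2*‖A X - v‖^2 := by
    intro X
    have e : u - v = (A X - v) - (A X - u) := by abel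
    have ht : ‖u - v‖ ≤ ‖A X - v‖ + ‖A X - u‖ := by rw [e]; exact norm_sub_le _ _
    have h0u : 0 ≤ ‖A X - u‖ := norm_nonneg _
    have h0v : 0 ≤ ‖A X - v‖ := norm_nonneg _
    have h0uv : 0 ≤ ‖u - v‖ := norm_nonneg _
    have hsq : ‖u - v‖^2 ≤ (‖A X - v‖ + ‖A X - u‖)^2 := by nlinarith
    nlinarith [sq_nonneg (‖A X - v‖ - ‖A X - u‖)]
  have hmp : ∑ X ∈ Finset.univ \ E, w i p X < 1/8 := by
    have hb : 8*c * ∑ X ∈ Finset.univ \ E, w i p X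
        ≤ bernExp i p (fun X => ‖A X - u‖^2) := by
      rw [Finset.mul_sum, bernExp_eq]
      refine le_trans (Finset.sum_le_sum ?_)
        (Finset.sum_le_sum_of_subset_of_nonneg Finset.sdiff_subset ?_)
      · intro X hX
        rw [Finset.mem_sdiff, hE, Finset.mem_filter] at hX
        have h8 : 8*c ≤ ‖A X - u‖^2 := by
          have := hX.2
          simp only [Finset.mem_univ, true_and, not_lt] at this
          linarith [this]
        nlinarith [hwp X]
      · intro X _ _
        have := sq_nonneg ‖A X - u‖
        nlinarith [hwp X]
    nlinarith [hb, h1]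
  have hmq : ∑ X ∈ E, w i q X < 1/8 := by
    have hb : 8*c * ∑ X ∈ E, w i q X ≤ bernExp i q (fun X => ‖A X - v‖^2) := by
      rw [Finset.mul_sum, bernExp_eq]
      refine le_trans (Finset.sum_le_sum ?_)
        (Finset.sum_le_sum_of_subset_of_nonneg (Finset.filter_subset _ _) ?_)
      · intro X hX
        rw [hE, Finset.mem_filter] at hX
        have h8 : 8*c ≤ ‖A X - v‖^2 := by
          have := hpt X
          linarith [hX.2]
        nlinarith [hwq X]
      · intro X _ _
        have := sq_nonneg ‖A X - v‖
        nlinarith [hwq X]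
    nlinarith [hb, h2]
  have hsplit : ∑ X ∈ Finset.univ \ E, w i p X + ∑ X ∈ E, w i p X = 1 := by
    rw [Finset.sum_sdiff (Finset.subset_univ E)]
    exact sum_w i p
  have hEp : 7/8 < ∑ X ∈ E, w i p X := by linarith
  have hs16 : 3/16 ≤ q*(1-q) := by nlinarith
  have hchi : (1 + (p - q)^2 / (q * (1 - q)))^i ≤ 15/14 := by
    apply chi_pow_le
    · exact div_nonneg (sq_nonneg _) (by linarith)
    · have hle : (p-q)^2/(q*(1-q)) ≤ (q-p)^2 * (16/3) := by
        rw [div_le_iff₀ (by linarith)]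
        nlinarith [sq_nonneg (p-q)]
      have h3 : (p-q)^2/(q*(1-q)) * i ≤ (q-p)^2*(16/3) * i :=
        mul_le_mul_of_nonneg_right hle (Nat.cast_nonneg i)
      nlinarith [hi, h3]
  have htv := tv_bound i p q (by linarith) (by linarith) (by linarith) (by linarith) hchi
  have hEle : ∑ X ∈ E, (w i p X - w i q X) ≤ 3/10 := by
    calc ∑ X ∈ E, (w i p X - w i q X) ≤ ∑ X ∈ E, |w i p X - w i q X| :=
          Finset.sum_le_sum (fun X _ => le_abs_self _)
      _ ≤ ∑ X : Fin i → Bool, |w i p X - w i q X| :=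
          Finset.sum_le_sum_of_subset_of_nonneg (Finset.subset_univ E) (fun _ _ _ => abs_nonneg _)
      _ ≤ 3/10 := htv
  rw [Finset.sum_sub_distrib] at hEle
  linarith


/-! ### Nat arithmetic -/

lemma pow16_ge (m : ℕ) (hm : 1 ≤ m) : 16 ≤ 16^m := by
  calc (16:ℕ) = 16^1 := (pow_one 16).symm
    _ ≤ 16^m := Nat.pow_le_pow_right (by norm_num) hm

lemma eSucc (m : ℕ) (hm : 1 ≤ m) : (16^(m+1) - 16)/15 = (16^m - 16)/15 + 16^m := by
  have h1 := pow16_ge m hm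
  have h2 : (15:ℕ) ∣ 16^m - 1 := by simpa using Nat.sub_dvd_pow_sub_pow 16 1 m
  have h3 : (16:ℕ)^(m+1) = 16 * 16^m := by ring
  omega

lemma epoch_card (K' m : ℕ) (hm : 1 ≤ m) : (epochRounds K' m).card = 16^m * K' := by
  rw [epochRounds, Nat.card_Ioc, eSucc m hm, Nat.add_mul]
  omega

lemma idx_bound (K' m t : ℕ) (hK' : 1 ≤ K') (hm : 1 ≤ m) (ht : t ∈ epochRounds K' m) :
    15 * intervalIdx K' t < 16^(m+1) := by
  rw [epochRounds, Finset.mem_Ioc] at ht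
  have h2 : intervalIdx K' t * K' ≤ t - 1 := Nat.div_mul_le_self _ _
  have ht1 : 1 ≤ t := by omega
  have h4 : intervalIdx K' t * K' < ((16^(m+1) - 16)/15) * K' := by omega
  have h5 : intervalIdx K' t < (16^(m+1) - 16)/15 := Nat.lt_of_mul_lt_mul_right h4
  have h6 : (16^(m+1) - 16)/15 * 15 ≤ 16^(m+1) - 16 := Nat.div_mul_le_self _ _
  have h7 := pow16_ge (m+1) (by omega)
  omega

/-! ### Real arithmetic helpers -/

lemma pow4sq (k : ℤ) : ((4:ℝ)^k)^2 = (16:ℝ)^k := by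
  rw [sq, ← mul_zpow]
  norm_num

lemma four_mul_pow (z : ℤ) : (4:ℝ)^z = 4 * (4:ℝ)^(z-1) := by
  rw [show z = 1 + (z-1) by ring, zpow_add₀ (by norm_num : (4:ℝ) ≠ 0)]
  ring_nf

lemma hi_real (i m : ℕ) (h : 15*i < 16^(m+2)) :
    (i:ℝ) * (16:ℝ)^(-((m:ℤ)+3)) ≤ 1/80 := by
  have h2 : (0:ℝ) < (16:ℝ)^(-((m:ℤ)+3)) := by positivity
  have h1 : (i:ℝ) ≤ (16:ℝ)^((m:ℤ)+2) / 15 := by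
    rw [le_div_iff₀ (by norm_num : (0:ℝ) < 15)]
    have hc : ((15 * i : ℕ) : ℝ) ≤ ((16^(m+2) : ℕ) : ℝ) := by exact_mod_cast h.le
    push_cast at hc
    rw [show ((m:ℤ)+2) = ((m+2 : ℕ) : ℤ) by push_cast; ring, zpow_natCast]
    push_cast
    linarith
  have h3 := mul_le_mul_of_nonneg_right h1 h2.le
  refine le_trans h3 ?_
  rw [div_mul_eq_mul_div, ← zpow_add₀ (by norm_num : (16:ℝ) ≠ 0),
    show (m:ℤ)+2 + -((m:ℤ)+3) = (-1 : ℤ) by ring,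
    show ((16:ℝ)^(-1:ℤ)) = 1/16 by norm_num]
  norm_num

/-! ### The construction -/

def fval (d K' : ℕ) (ξ : ℝ) (A : (t : ℕ) → (Fin (intervalIdx K' t) → Bool) → EV d)
    (t : ℕ) (p : ℝ) : ℝ :=
  bernExp (intervalIdx K' t) p (fun X => ‖A t X - ξ • constVec d p‖ ^ 2)

def thr (d : ℕ) (ξ : ℝ) (m : ℕ) : ℝ := (16:ℝ)^(-((m:ℤ)+3)) * d * ξ^2 / 8

open Classical in
def badSet (d K' : ℕ) (ξ : ℝ) (A : (t : ℕ) → (Fin (intervalIdx K' t) → Bool) → EV d)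
    (m : ℕ) (x : ℝ) : Finset ℕ :=
  (epochRounds K' m).filter
    (fun t => ¬ ∀ p ∈ Set.Icc x (x + (4:ℝ)^(-((m:ℤ)+3))), thr d ξ m ≤ fval d K' ξ A t p)

open Classical in
def aSeq (d K' : ℕ) (ξ : ℝ) (A : (t : ℕ) → (Fin (intervalIdx K' t) → Bool) → EV d) : ℕ → ℝ
  | 0 => 1/4
  | (m+1) =>
    if (badSet d K' ξ A (m+1) (aSeq d K' ξ A m)).card
        ≤ (badSet d K' ξ A (m+1) (aSeq d K' ξ A m + 3*(4:ℝ)^(-((m:ℤ)+4)))).card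
    then aSeq d K' ξ A m
    else aSeq d K' ξ A m + 3*(4:ℝ)^(-((m:ℤ)+4))

variable (d K' : ℕ) (ξ : ℝ) (A : (t : ℕ) → (Fin (intervalIdx K' t) → Bool) → EV d)

lemma aSeq_succ_cases (m : ℕ) :
    aSeq d K' ξ A (m+1) = aSeq d K' ξ A m ∨
    aSeq d K' ξ A (m+1) = aSeq d K' ξ A m + 3*(4:ℝ)^(-((m:ℤ)+4)) := by
  rw [aSeq]
  split_ifs <;> simp

lemma aSeq_nested (m : ℕ) :
    aSeq d K' ξ A m ≤ aSeq d K' ξ A (m+1) ∧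
    aSeq d K' ξ A (m+1) + (4:ℝ)^(-((m:ℤ)+4)) ≤ aSeq d K' ξ A m + (4:ℝ)^(-((m:ℤ)+3)) := by
  have hp : (0:ℝ) < (4:ℝ)^(-((m:ℤ)+4)) := by positivity
  have h4 : (4:ℝ)^(-((m:ℤ)+3)) = 4 * (4:ℝ)^(-((m:ℤ)+4)) := by
    rw [four_mul_pow (-((m:ℤ)+3))]
    norm_num
    ring_nf
  rcases aSeq_succ_cases d K' ξ A m with h | h <;> rw [h] <;> constructor <;> linarith

lemma aSeq_inv (m : ℕ) :
    1/4 ≤ aSeq d K' ξ A m ∧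
    aSeq d K' ξ A m + (4:ℝ)^(-((m:ℤ)+3)) ≤ 1/4 + (4:ℝ)^(-(3:ℤ)) := by
  induction m with
  | zero => norm_num [aSeq]
  | succ n ih =>
    have hn := aSeq_nested d K' ξ A n
    have hc : (((n+1:ℕ)):ℤ) = (n:ℤ)+1 := by push_cast; ring
    constructor
    · linarith [hn.1, ih.1]
    · have he : -((((n+1:ℕ)):ℤ)+3) = -((n:ℤ)+4) := by push_cast; ring
      rw [he]
      linarith [hn.2, ih.2]

lemma half (hd : 1 ≤ d) (hK' : 1 ≤ K') (hξ : 0 < ξ) (m : ℕ) :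
    2 * (badSet d K' ξ A (m+1) (aSeq d K' ξ A (m+1))).card ≤ 16^(m+1) * K' := by
  classical
  set x := aSeq d K' ξ A m with hx
  set L : ℝ := (4:ℝ)^(-((m:ℤ)+4)) with hL
  have hLpos : (0:ℝ) < L := by positivity
  have h4L : (4:ℝ)^(-((m:ℤ)+3)) = 4 * L := by
    rw [hL, four_mul_pow (-((m:ℤ)+3))]
    norm_num
    ring_nf
  have ecast : -((((m+1:ℕ)):ℤ)+3) = -((m:ℤ)+4) := by push_cast; ring
  have hinv := aSeq_inv d K' ξ A m
  have h43 : (4:ℝ)^(-(3:ℤ)) = 1/64 := by norm_num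
  set c : ℝ := (16:ℝ)^(-((m:ℤ)+4)) * d * ξ^2 / 8 with hc
  have hthr : thr d ξ (m+1) = c := by rw [thr, ecast]
  have hcpos : 0 < c := by
    have hd0 : (0:ℝ) < d := by exact_mod_cast Nat.lt_of_lt_of_le Nat.zero_lt_one hd
    rw [hc]
    have h16 : (0:ℝ) < (16:ℝ)^(-((m:ℤ)+4)) := by positivity
    exact div_pos (mul_pos (mul_pos h16 hd0) (pow_pos hξ 2)) (by norm_num)
  have hdis : Disjoint (badSet d K' ξ A (m+1) x) (badSet d K' ξ A (m+1) (x + 3*L)) := by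
    rw [Finset.disjoint_left]
    intro t ht1 ht2
    simp only [badSet, Finset.mem_filter] at ht1 ht2
    obtain ⟨htE, hbad1⟩ := ht1
    obtain ⟨-, hbad2⟩ := ht2
    push_neg at hbad1 hbad2
    obtain ⟨p, hpmem, hfp⟩ := hbad1
    obtain ⟨q, hqmem, hfq⟩ := hbad2
    rw [ecast] at hpmem hqmem
    rw [hthr] at hfp hfq
    rw [← hL] at hpmem hqmem
    obtain ⟨hp1, hp2⟩ := hpmem
    obtain ⟨hq1, hq2⟩ := hqmem
    -- p, q ∈ [1/4, 3/4]
    have hbp : p ∈ Set.Icc (1/4:ℝ) (3/4) := by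
      constructor
      · linarith [hinv.1]
      · rw [h43] at hinv
        linarith [hinv.2]
    have hbq : q ∈ Set.Icc (1/4:ℝ) (3/4) := by
      constructor
      · linarith [hinv.1]
      · rw [h43] at hinv
        linarith [hinv.2]
    -- gap
    have hqp1 : 2*L ≤ q - p := by linarith
    have hqp2 : q - p ≤ 4*L := by linarith
    have hL2 : L^2 = (16:ℝ)^(-((m:ℤ)+4)) := by rw [hL]; exact pow4sq _
    have hgap : 32*c ≤ d*ξ^2*(q-p)^2 := by
      have hd1 : (1:ℝ) ≤ d := by exact_mod_cast hd
      have h1 : 4*(16:ℝ)^(-((m:ℤ)+4)) ≤ (q-p)^2 := by nlinarith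
      have h2 := mul_le_mul_of_nonneg_left h1 (show (0:ℝ) ≤ d*ξ^2 by positivity)
      rw [hc]
      nlinarith [pow_pos hξ 2, show (0:ℝ) < (16:ℝ)^(-((m:ℤ)+4)) from by positivity]
    -- index bound
    have hidx : 15 * intervalIdx K' t < 16^(m+2) := idx_bound K' (m+1) t hK' (by omega) htE
    have hir := hi_real (intervalIdx K' t) m hidx
    have h163 : (16:ℝ)^(-((m:ℤ)+3)) = 16 * (16:ℝ)^(-((m:ℤ)+4)) := by
      rw [show -((m:ℤ)+3) = 1 + -((m:ℤ)+4) by ring, zpow_add₀ (by norm_num : (16:ℝ) ≠ 0)]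
      norm_num
    have hqps : (q-p)^2 ≤ (16:ℝ)^(-((m:ℤ)+3)) := by nlinarith
    have hi2 : (intervalIdx K' t : ℝ) * (q-p)^2 ≤ 1/80 := by
      have := mul_le_mul_of_nonneg_left hqps (Nat.cast_nonneg (intervalIdx K' t) : (0:ℝ) ≤ _)
      linarith
    rcases key d (intervalIdx K' t) ξ p q c hd hξ hcpos hbp hbq hgap hi2 (A t) with h | h
    · exact absurd h (not_le.mpr hfp)
    · exact absurd h (not_le.mpr hfq)
  have hsub : (badSet d K' ξ A (m+1) x ∪ badSet d K' ξ A (m+1) (x+3*L)) ⊆ epochRounds K' (m+1) :=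
    Finset.union_subset (Finset.filter_subset _ _) (Finset.filter_subset _ _)
  have hcard := Finset.card_le_card hsub
  rw [Finset.card_union_of_disjoint hdis, epoch_card K' (m+1) (by omega)] at hcard
  rw [aSeq, ← hL, ← hx]
  split_ifs with h
  · omega
  · omega


end S10

theorem statement_10 (d K' M : ℕ) (hd : 1 ≤ d) (hK' : 1 ≤ K') (hM : 1 ≤ M)
    (ξ : ℝ) (hξ : 0 < ξ)
    (A : (t : ℕ) → (Fin (intervalIdx K' t) → Bool) → EV d) :
    ∃ a : ℕ → ℝ,
      -- I_1 ⊆ [1/4, 3/4]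
      Set.Icc (a 1) (a 1 + (4 : ℝ) ^ (-(4 : ℤ))) ⊆ Set.Icc (1 / 4 : ℝ) (3 / 4) ∧
      -- I_{m+1} ⊆ I_m
      (∀ m, 1 ≤ m → m + 1 ≤ M →
        Set.Icc (a (m + 1)) (a (m + 1) + (4 : ℝ) ^ (-((m : ℤ) + 4))) ⊆
          Set.Icc (a m) (a m + (4 : ℝ) ^ (-((m : ℤ) + 3)))) ∧
      -- for every p ∈ I_m, the inequality holds on at least half the rounds of epoch m
      (∀ m, 1 ≤ m → m ≤ M → ∀ p ∈ Set.Icc (a m) (a m + (4 : ℝ) ^ (-((m : ℤ) + 3))),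
        ∃ S : Finset ℕ, S ⊆ epochRounds K' m ∧ 16 ^ m * K' ≤ 2 * S.card ∧
          ∀ t ∈ S, (16 : ℝ) ^ (-((m : ℤ) + 3)) * d * ξ ^ 2 / 8 ≤
            bernExp (intervalIdx K' t) p
              (fun X => ‖A t X - ξ • constVec d p‖ ^ 2)) := by
  classical
  refine ⟨S10.aSeq d K' ξ A, ?_, ?_, ?_⟩
  · have hinv := S10.aSeq_inv d K' ξ A 1
    have h1 := hinv.1
    have h2 := hinv.2
    rw [show -(((1:ℕ):ℤ)+3) = (-(4:ℤ)) by norm_num] at h2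
    rw [show ((4:ℝ)^(-(3:ℤ))) = 1/64 by norm_num] at h2
    exact Set.Icc_subset_Icc h1 (by linarith)
  · intro m _ _
    exact Set.Icc_subset_Icc (S10.aSeq_nested d K' ξ A m).1 (S10.aSeq_nested d K' ξ A m).2
  · intro m hm _ p hp
    obtain ⟨n, rfl⟩ : ∃ n, m = n + 1 := ⟨m - 1, by omega⟩
    refine ⟨epochRounds K' (n+1) \ S10.badSet d K' ξ A (n+1) (S10.aSeq d K' ξ A (n+1)),
      Finset.sdiff_subset, ?_, ?_⟩
    · have hhalf := S10.half d K' ξ A hd hK' hξ n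
      have hec := S10.epoch_card K' (n+1) (by omega)
      have hb_sub : S10.badSet d K' ξ A (n+1) (S10.aSeq d K' ξ A (n+1)) ⊆ epochRounds K' (n+1) :=
        Finset.filter_subset _ _
      have hcs := Finset.card_sdiff_of_subset hb_sub
      have hble := Finset.card_le_card hb_sub
      omega
    · intro t ht
      rw [Finset.mem_sdiff] at ht
      obtain ⟨htE, htB⟩ := ht
      have hall : ∀ p' ∈ Set.Icc (S10.aSeq d K' ξ A (n+1))
          (S10.aSeq d K' ξ A (n+1) + (4:ℝ)^(-((((n+1:ℕ)):ℤ)+3))),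
          S10.thr d ξ (n+1) ≤ S10.fval d K' ξ A t p' := by
        by_contra hcon
        exact htB (Finset.mem_filter.mpr ⟨htE, hcon⟩)
      exact hall p hp
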